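/- For every i ∈ F_q, the identity (Σ_{x ∈ X_i} x) · (Σ_{x ∈ X_i} x⁻¹) = q²·e + q·(Σ_{g ∈ G} g − Σ_{z ∈ Z} z) holds in the integral group ring ℤ[G]. Equivalently: for every g ∈ G \ Z the number of pairs (u,v) ∈ X_i × X_i with uv⁻¹ = g equals q, for every g ∈ Z \ {e} this number equals 0, and for g = e it equals q². That is, X_i is a divisible difference set with parameters (q², q, q², 0, q) which is a transversal for Z in G. -/

import Mathlib

/-- The Heisenberg group `H₃(F)` of upper unitriangular 3×3 matrices over `F`,
recorded by the three free entries: `x` in position (1,2), `y` in position (2,3),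
`z` in position (1,3). -/
@[ext]
structure Heis (F : Type*) where
  x : F
  y : F
  z : F
deriving DecidableEq

namespace Heis

variable {F : Type*} [Field F]

/-- Multiplication corresponding to the matrix product. -/
instance : Group (Heis F) where
  mul a b := ⟨a.x + b.x, a.y + b.y, a.z + b.z + a.x * b.y⟩
  one := ⟨0, 0, 0⟩
  inv a := ⟨-a.x, -a.y, -a.z + a.x * a.y⟩
  mul_assoc a b c := Heis.ext
    (show a.x + b.x + c.x = a.x + (b.x + c.x) by ring)
    (show a.y + b.y + c.y = a.y + (b.y + c.y) by ring)
    (show a.z + b.z + a.x * b.y + c.z + (a.x + b.x) * c.y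
        = a.z + (b.z + c.z + b.x * c.y) + a.x * (b.y + c.y) by ring)
  one_mul a := Heis.ext
    (show (0 : F) + a.x = a.x by ring)
    (show (0 : F) + a.y = a.y by ring)
    (show (0 : F) + a.z + 0 * a.y = a.z by ring)
  mul_one a := Heis.ext
    (show a.x + 0 = a.x by ring)
    (show a.y + 0 = a.y by ring)
    (show a.z + 0 + a.x * 0 = a.z by ring)
  inv_mul_cancel a := Heis.ext
    (show -a.x + a.x = 0 by ring)
    (show -a.y + a.y = 0 by ring)
    (show -a.z + a.x * a.y + a.z + -a.x * a.y = 0 by ring)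

instance [Fintype F] : Fintype (Heis F) :=
  Fintype.ofEquiv (F × F × F)
    ⟨fun p => ⟨p.1, p.2.1, p.2.2⟩, fun a => (a.x, a.y, a.z), fun _ => rfl, fun _ => rfl⟩

end Heis

/-- The element `g(x,y,z)` of the Heisenberg group. -/
def gElt {F : Type*} (x y z : F) : Heis F := ⟨x, y, z⟩

/-- The center `Z = {g(0,0,z) : z ∈ F}` of the Heisenberg group, as a set. -/
def Zset (F : Type*) [Field F] : Set (Heis F) := {g : Heis F | g.x = 0 ∧ g.y = 0}

/-- The center `Z` as a subgroup of the Heisenberg group. -/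
def Zsub (F : Type*) [Field F] : Subgroup (Heis F) where
  carrier := Zset F
  mul_mem' := fun {a b} ha hb =>
    ⟨show a.x + b.x = 0 by rw [ha.1, hb.1, add_zero],
     show a.y + b.y = 0 by rw [ha.2, hb.2, add_zero]⟩
  one_mem' := ⟨rfl, rfl⟩
  inv_mem' := fun {a} ha =>
    ⟨show -a.x = 0 by rw [ha.1, neg_zero],
     show -a.y = 0 by rw [ha.2, neg_zero]⟩

/-- `γ_i(α,β) = αβ/2 + (α² − εβ²)i`. -/
def gam {F : Type*} [Field F] (ε i α β : F) : F := α * β / 2 + (α ^ 2 - ε * β ^ 2) * i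

/-- `Y_i = {g(α, β, γ_i(α,β)) : (α,β) ≠ (0,0)}`. -/
def Yset {F : Type*} [Field F] (ε i : F) : Set (Heis F) :=
  {g : Heis F | ∃ α β : F, (α, β) ≠ (0, 0) ∧ g = gElt α β (gam ε i α β)}

/-- `X_i = Y_i ∪ {e}`. -/
def Xset {F : Type*} [Field F] (ε i : F) : Set (Heis F) := Yset ε i ∪ {1}

/-- The map `ρ(M) : G → G` attached to the matrix `M = [[α,β],[εβ,α]]`. -/
def rho {F : Type*} [Field F] (ε α β : F) : Heis F → Heis F := fun g =>
  gElt (α * g.x + ε * β * g.y) (β * g.x + α * g.y)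
    (α * β * (g.x ^ 2 / 2 + ε * g.y ^ 2 / 2) + ε * β ^ 2 * g.x * g.y
      + (α ^ 2 - ε * β ^ 2) * g.z)

/-- `K = {ρ(M) : M = [[α,β],[εβ,α]], (α,β) ≠ (0,0)}`, as a set of maps `G → G`. -/
def Kset {F : Type*} [Field F] (ε : F) : Set (Heis F → Heis F) :=
  {f | ∃ α β : F, (α, β) ≠ (0, 0) ∧ f = rho ε α β}

/-- The family of sets `{e}`, `Z \ {e}`, `Y_i` for `i ∈ F`. -/
def SFam {F : Type*} [Field F] (ε : F) : Set (Set (Heis F)) :=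
  insert {1} (insert (Zset F \ {1}) {S | ∃ i : F, S = Yset ε i})

/-- `f` preserves each of the basic sets `{e}`, `Z \ {e}`, `Y_i`:
`hg⁻¹ ∈ S ↔ f(h)f(g)⁻¹ ∈ S`. -/
def Preserves {F : Type*} [Field F] (ε : F) (f : Heis F → Heis F) : Prop :=
  ∀ S ∈ SFam ε, ∀ g h : Heis F, h * g⁻¹ ∈ S ↔ f h * (f g)⁻¹ ∈ S

/-- The set of permutations of `G` of the form `x ↦ σ(x)·c` with `σ ∈ K`, `c ∈ G`. -/
def Aset {F : Type*} [Field F] (ε : F) : Set (Equiv.Perm (Heis F)) :=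
  {f | ∃ σ ∈ Kset ε, ∃ c : Heis F, ∀ x : Heis F, f x = σ x * c}

/-- The operation `ψ` on `F ∪ {∞}`, with `∞` encoded as `none`. -/
def psi {F : Type*} [Field F] [DecidableEq F] (ε : F) : Option F → Option F → Option F
  | none, j => j
  | some i, none => some i
  | some i, some j => if i + j = 0 then none else some ((i * j + ε / 16) / (i + j))

/-- `Y_k` for `k ∈ F ∪ {∞}`, where `Y_∞ = Z \ {e}`. -/
def YInf {F : Type*} [Field F] (ε : F) : Option F → Set (Heis F)
  | some i => Yset ε i
  | none => Zset F \ {1}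

section S3Helpers

open Finset

namespace S3

open scoped Classical

variable {F : Type*} [Field F]

lemma mul_def (a b : Heis F) :
    a * b = ⟨a.x + b.x, a.y + b.y, a.z + b.z + a.x * b.y⟩ := rfl

lemma inv_def (a : Heis F) : a⁻¹ = ⟨-a.x, -a.y, -a.z + a.x * a.y⟩ := rfl

lemma one_def : (1 : Heis F) = (⟨0, 0, 0⟩ : Heis F) := rfl

/-- The parametrization of `X_i` by `F²`. -/
def phi (ε i : F) (p : F × F) : Heis F := ⟨p.1, p.2, gam ε i p.1 p.2⟩

lemma phi_inj (ε i : F) : Function.Injective (phi ε i) := by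
  rintro ⟨a, b⟩ ⟨c, d⟩ h
  simp only [phi, Heis.mk.injEq] at h
  simp [h.1, h.2.1]

lemma Xset_eq_range (ε i : F) : Xset ε i = Set.range (phi ε i) := by
  ext g
  constructor
  · rintro (⟨α, β, -, rfl⟩ | rfl)
    · exact ⟨(α, β), rfl⟩
    · exact ⟨(0, 0), by simp [phi, gam, one_def]⟩
  · rintro ⟨⟨α, β⟩, rfl⟩
    by_cases h : (α, β) = (0, 0)
    · right
      rw [Prod.mk.injEq] at h
      simp [phi, gam, h.1, h.2, one_def]
    · exact Or.inl ⟨α, β, h, rfl⟩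

/-- Coefficients of the affine equation determining `φ p * (φ q)⁻¹ = g`. -/
noncomputable def Uc (i : F) (g : Heis F) : F := g.y / 2 + 2 * g.x * i
noncomputable def Vc (ε i : F) (g : Heis F) : F := -(g.x / 2 + 2 * ε * g.y * i)
noncomputable def Wc (ε i : F) (g : Heis F) : F :=
  g.z - g.x * g.y / 2 - (g.x ^ 2 - ε * g.y ^ 2) * i

lemma key {ε : F} (h2 : (2 : F) ≠ 0) (i : F) (g : Heis F) (p q : F × F) :
    phi ε i p * (phi ε i q)⁻¹ = g ↔
      p.1 = q.1 + g.x ∧ p.2 = q.2 + g.y ∧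
        Uc i g * q.1 + Vc ε i g * q.2 = Wc ε i g := by
  obtain ⟨p1, p2⟩ := p
  obtain ⟨q1, q2⟩ := q
  obtain ⟨a, b, c⟩ := g
  simp only [phi, mul_def, inv_def, Heis.mk.injEq, Uc, Vc, Wc, gam]
  constructor
  · rintro ⟨e1, e2, e3⟩
    refine ⟨by linear_combination e1, by linear_combination e2, ?_⟩
    have hp1 : p1 = q1 + a := by linear_combination e1
    have hp2 : p2 = q2 + b := by linear_combination e2
    subst hp1; subst hp2
    field_simp at e3 ⊢
    linear_combination e3
  · rintro ⟨e1, e2, e3⟩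
    subst e1; subst e2
    refine ⟨by ring, by ring, ?_⟩
    field_simp at e3 ⊢
    linear_combination e3

/-- If `g ∉ Z` then the coefficients `(U, V)` are not both zero. -/
lemma coeff_ne {ε : F} (hε : ¬IsSquare ε) (h2 : (2 : F) ≠ 0) (i : F) (g : Heis F)
    (hg : ¬(g.x = 0 ∧ g.y = 0)) : Uc i g ≠ 0 ∨ Vc ε i g ≠ 0 := by
  by_contra h
  push_neg at h
  obtain ⟨hu, hv⟩ := h
  rw [Uc] at hu; rw [Vc] at hv
  set a := g.x with ha'
  set b := g.y with hb'
  by_cases ha : a = 0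
  · refine hg ⟨ha, ?_⟩
    rw [ha] at hu
    field_simp at hu
    linear_combination hu
  · have hkey : 1 - 16 * ε * i ^ 2 = 0 := by
      field_simp at hu hv
      have h0 : a * (1 - 16 * ε * i ^ 2) = 0 := by
        linear_combination -hv - 4 * ε * i * hu
      rcases mul_eq_zero.mp h0 with h | h
      · exact absurd h ha
      · exact h
    have hi : i ≠ 0 := by
      intro hi0
      rw [hi0] at hkey
      norm_num at hkey
    have h4 : (4 : F) ≠ 0 := by
      intro h; apply h2
      have h22 : (2 : F) * 2 = 4 := by norm_num
      rcases mul_eq_zero.mp (h22.trans h ▸ rfl : (2 : F) * 2 = 0) with h | h <;> exact h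
    exact hε ⟨(4 * i)⁻¹, by field_simp; linear_combination -hkey⟩

variable [Fintype F]

lemma two_ne_zero' (hodd : Odd (Fintype.card F)) : (2 : F) ≠ 0 := by
  apply Ring.two_ne_zero
  intro h
  have := FiniteField.even_card_of_char_two h
  rw [Nat.odd_iff] at hodd
  omega

/-- A nonzero affine equation on `F²` has exactly `|F|` solutions. -/
lemma affine_card (u v w : F) (h : u ≠ 0 ∨ v ≠ 0) :
    (Finset.univ.filter fun p : F × F => u * p.1 + v * p.2 = w).card
      = Fintype.card F := by
  rcases h with hu | hv
  · have himg : Finset.univ.filter (fun p : F × F => u * p.1 + v * p.2 = w)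
        = Finset.univ.image (fun t : F => ((w - v * t) / u, t)) := by
      ext ⟨p1, p2⟩
      simp only [mem_filter, mem_univ, true_and, mem_image, Prod.mk.injEq]
      constructor
      · intro hp
        exact ⟨p2, by field_simp; linear_combination -hp, rfl⟩
      · rintro ⟨t, h1, h2⟩
        subst h2
        field_simp at h1
        linear_combination -h1
    rw [himg, Finset.card_image_of_injective _ (fun s t hst => (Prod.mk.injEq _ _ _ _ ▸ hst).2),
      Finset.card_univ]
  · have himg : Finset.univ.filter (fun p : F × F => u * p.1 + v * p.2 = w)
        = Finset.univ.image (fun t : F => (t, (w - u * t) / v)) := by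
      ext ⟨p1, p2⟩
      simp only [mem_filter, mem_univ, true_and, mem_image, Prod.mk.injEq]
      constructor
      · intro hp
        exact ⟨p1, rfl, by field_simp; linear_combination -hp⟩
      · rintro ⟨t, h1, h2⟩
        subst h1
        field_simp at h2
        linear_combination -h2
    rw [himg, Finset.card_image_of_injective _ (fun s t hst => (Prod.mk.injEq _ _ _ _ ▸ hst).1),
      Finset.card_univ]

/-- The number of pairs `(p, q)` in the parameter space with `φ p · (φ q)⁻¹ = g`. -/
noncomputable def pairCount (ε i : F) (g : Heis F) : ℕ :=
  (Finset.univ.filter fun r : (F × F) × (F × F) =>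
    phi ε i r.1 * (phi ε i r.2)⁻¹ = g).card

lemma pairCount_notZ {ε : F} (hε : ¬IsSquare ε) (h2 : (2 : F) ≠ 0) (i : F)
    (g : Heis F) (hg : ¬(g.x = 0 ∧ g.y = 0)) :
    pairCount ε i g = Fintype.card F := by
  rw [pairCount, ← affine_card (Uc i g) (Vc ε i g) (Wc ε i g) (coeff_ne hε h2 i g hg)]
  apply Finset.card_bij (fun (r : (F × F) × (F × F)) _ => r.2)
  · intro r hr
    rw [mem_filter] at hr ⊢
    exact ⟨mem_univ _, ((key h2 i g r.1 r.2).mp hr.2).2.2⟩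
  · intro r hr s hs hrs
    rw [mem_filter] at hr hs
    obtain ⟨h1, h2', -⟩ := (key h2 i g r.1 r.2).mp hr.2
    obtain ⟨h1', h2'', -⟩ := (key h2 i g s.1 s.2).mp hs.2
    have : r.1 = s.1 := by
      rw [Prod.ext_iff]
      constructor
      · rw [h1, h1', hrs]
      · rw [h2', h2'', hrs]
    exact Prod.ext this hrs
  · intro q hq
    rw [mem_filter] at hq
    refine ⟨((q.1 + g.x, q.2 + g.y), q), ?_, rfl⟩
    rw [mem_filter]
    exact ⟨mem_univ _, (key h2 i g _ q).mpr ⟨rfl, rfl, hq.2⟩⟩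

lemma pairCount_one (ε i : F) : pairCount ε i 1 = Fintype.card F ^ 2 := by
  have himg : (Finset.univ.filter fun r : (F × F) × (F × F) =>
      phi ε i r.1 * (phi ε i r.2)⁻¹ = 1)
      = Finset.univ.image (fun p : F × F => (p, p)) := by
    ext r
    simp only [mem_filter, mem_univ, true_and, mem_image]
    rw [mul_inv_eq_one]
    constructor
    · intro h
      exact ⟨r.2, Prod.ext (phi_inj ε i h).symm rfl⟩
    · rintro ⟨p, rfl⟩
      rfl
  rw [pairCount, himg,
    Finset.card_image_of_injective _ (fun s t hst => (Prod.mk.injEq _ _ _ _ ▸ hst).1),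
    Finset.card_univ, Fintype.card_prod, sq]

lemma pairCount_center {ε : F} (h2 : (2 : F) ≠ 0) (i : F) (g : Heis F) (hg : g.x = 0 ∧ g.y = 0) (hg1 : g ≠ 1) :
    pairCount ε i g = 0 := by
  rw [pairCount, Finset.card_eq_zero, Finset.filter_eq_empty_iff]
  intro r _ hr
  obtain ⟨h1, h2, -⟩ := (key h2 i g r.1 r.2).mp hr
  rw [hg.1, add_zero] at h1
  rw [hg.2, add_zero] at h2
  have hr12 : r.1 = r.2 := Prod.ext h1 h2
  rw [hr12, mul_inv_cancel] at hr
  exact hg1 hr.symm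

lemma natCard_eq (ε i : F) (g : Heis F) :
    Nat.card {p : Heis F × Heis F //
        p.1 ∈ Xset ε i ∧ p.2 ∈ Xset ε i ∧ p.1 * p.2⁻¹ = g}
      = pairCount ε i g := by
  rw [Nat.card_eq_fintype_card, Fintype.card_subtype, pairCount]
  refine (Finset.card_bij
    (fun (r : (F × F) × (F × F)) _ => (phi ε i r.1, phi ε i r.2)) ?_ ?_ ?_).symm
  · intro r hr
    rw [mem_filter] at hr ⊢
    refine ⟨mem_univ _, ?_, ?_, hr.2⟩
    · rw [Xset_eq_range]; exact ⟨r.1, rfl⟩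
    · rw [Xset_eq_range]; exact ⟨r.2, rfl⟩
  · intro r hr s hs hrs
    rw [Prod.mk.injEq] at hrs
    exact Prod.ext (phi_inj ε i hrs.1) (phi_inj ε i hrs.2)
  · intro b hb
    rw [mem_filter] at hb
    obtain ⟨-, hb1, hb2, hbg⟩ := hb
    rw [Xset_eq_range] at hb1 hb2
    obtain ⟨p, hp⟩ := hb1
    obtain ⟨q, hq⟩ := hb2
    refine ⟨(p, q), ?_, ?_⟩
    · rw [mem_filter]
      exact ⟨mem_univ _, by rw [hp, hq]; exact hbg⟩
    · rw [Prod.ext_iff]; exact ⟨hp, hq⟩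

end S3

end S3Helpers

open scoped Classical in
/-- For every `i ∈ F_q`, the identity
`(Σ_{x ∈ X_i} x)·(Σ_{x ∈ X_i} x⁻¹) = q²·e + q·(Σ_G − Σ_Z)` holds in `ℤ[G]`; equivalently,
for `g ∉ Z` the number of pairs `(u,v) ∈ X_i × X_i` with `uv⁻¹ = g` is `q`, for
`g ∈ Z \ {e}` it is `0`, and for `g = e` it is `q²`; that is, `X_i` is a divisible
difference set with parameters `(q², q, q², 0, q)` which is a transversal for `Z` in `G`. -/
theorem statement_3 {F : Type*} [Field F] [Fintype F]
    (hodd : Odd (Fintype.card F)) (ε : F) (hε : ¬IsSquare ε) (i : F) :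
    (∑ x ∈ Finset.univ.filter (fun x : Heis F => x ∈ Xset ε i),
        MonoidAlgebra.of ℤ (Heis F) x) *
      (∑ x ∈ Finset.univ.filter (fun x : Heis F => x ∈ Xset ε i),
        MonoidAlgebra.of ℤ (Heis F) x⁻¹) =
      (Fintype.card F ^ 2) • MonoidAlgebra.of ℤ (Heis F) 1 +
      (Fintype.card F) •
        ((∑ g : Heis F, MonoidAlgebra.of ℤ (Heis F) g) -
          ∑ z ∈ Finset.univ.filter (fun z : Heis F => z ∈ Zset F),
            MonoidAlgebra.of ℤ (Heis F) z) ∧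
    (∀ g : Heis F, g ∉ Zset F →
      Nat.card {p : Heis F × Heis F // p.1 ∈ Xset ε i ∧ p.2 ∈ Xset ε i ∧ p.1 * p.2⁻¹ = g}
        = Fintype.card F) ∧
    (∀ g ∈ Zset F \ {1},
      Nat.card {p : Heis F × Heis F // p.1 ∈ Xset ε i ∧ p.2 ∈ Xset ε i ∧ p.1 * p.2⁻¹ = g}
        = 0) ∧
    Nat.card {p : Heis F × Heis F // p.1 ∈ Xset ε i ∧ p.2 ∈ Xset ε i ∧ p.1 * p.2⁻¹ = 1}
      = Fintype.card F ^ 2 ∧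
    (∀ g : Heis F, ∃! x : Heis F, x ∈ Xset ε i ∧ x * g⁻¹ ∈ Zset F) := by
  classical
  have h2 : (2 : F) ≠ 0 := S3.two_ne_zero' hodd
  have hone : (1 : Heis F) ∈ Zset F := ⟨rfl, rfl⟩
  refine ⟨?_, ?_, ?_, ?_, ?_⟩
  · -- the group-ring identity
    have hset : Finset.univ.filter (fun x : Heis F => x ∈ Xset ε i)
        = Finset.univ.image (S3.phi ε i) := by
      ext x
      simp [S3.Xset_eq_range ε i, eq_comm]
    rw [hset, Finset.sum_image (fun a _ b _ h => S3.phi_inj ε i h),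
      Finset.sum_image (fun a _ b _ h => S3.phi_inj ε i h), Finset.sum_mul_sum]
    simp_rw [← map_mul]
    rw [← Finset.sum_product', Finset.univ_product_univ,
      ← Finset.sum_fiberwise' Finset.univ
        (fun r : (F × F) × (F × F) => S3.phi ε i r.1 * (S3.phi ε i r.2)⁻¹)
        (fun g => MonoidAlgebra.of ℤ (Heis F) g)]
    simp_rw [Finset.sum_const]
    have hcount : ∀ jg : Heis F,
        (Finset.univ.filter fun r : (F × F) × (F × F) =>
          S3.phi ε i r.1 * (S3.phi ε i r.2)⁻¹ = jg).card = S3.pairCount ε i jg :=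
      fun _ => rfl
    simp_rw [hcount]
    have hsplit := Finset.sum_filter_add_sum_filter_not Finset.univ
      (fun g : Heis F => g ∈ Zset F)
      (fun g => (S3.pairCount ε i g) • MonoidAlgebra.of ℤ (Heis F) g)
    have hZ : ∑ g ∈ Finset.univ.filter (fun g : Heis F => g ∈ Zset F),
        (S3.pairCount ε i g) • MonoidAlgebra.of ℤ (Heis F) g
        = (Fintype.card F ^ 2) • MonoidAlgebra.of ℤ (Heis F) 1 := by
      rw [Finset.sum_eq_single_of_mem (1 : Heis F)
        (Finset.mem_filter.mpr ⟨Finset.mem_univ _, hone⟩)]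
      · rw [S3.pairCount_one]
      · intro b hb hb1
        rw [S3.pairCount_center h2 i b (Finset.mem_filter.mp hb).2 hb1, zero_smul]
    have hnotZ : ∑ g ∈ Finset.univ.filter (fun g : Heis F => ¬g ∈ Zset F),
        (S3.pairCount ε i g) • MonoidAlgebra.of ℤ (Heis F) g
        = (Fintype.card F) • ∑ g ∈ Finset.univ.filter (fun g : Heis F => ¬g ∈ Zset F),
            MonoidAlgebra.of ℤ (Heis F) g := by
      rw [Finset.smul_sum]
      refine Finset.sum_congr rfl fun g hg => ?_
      rw [S3.pairCount_notZ hε h2 i g (Finset.mem_filter.mp hg).2]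
    have hsplit2 := Finset.sum_filter_add_sum_filter_not Finset.univ
      (fun g : Heis F => g ∈ Zset F) (fun g => MonoidAlgebra.of ℤ (Heis F) g)
    rw [← hsplit, hZ, hnotZ, ← hsplit2]
    congr 1
    rw [add_sub_cancel_left]
  · intro g hg
    rw [S3.natCard_eq, S3.pairCount_notZ hε h2 i g hg]
  · rintro g ⟨hgZ, hg1⟩
    rw [S3.natCard_eq, S3.pairCount_center h2 i g hgZ hg1]
  · rw [S3.natCard_eq, S3.pairCount_one]
  · intro g
    refine ⟨S3.phi ε i (g.x, g.y), ⟨?_, ?_⟩, ?_⟩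
    · rw [S3.Xset_eq_range]; exact ⟨(g.x, g.y), rfl⟩
    · constructor <;> simp [S3.mul_def, S3.inv_def, S3.phi]
    · rintro y ⟨hy, hyz⟩
      rw [S3.Xset_eq_range] at hy
      obtain ⟨p, rfl⟩ := hy
      have e1 : (S3.phi ε i p * g⁻¹).x = 0 := hyz.1
      have e2 : (S3.phi ε i p * g⁻¹).y = 0 := hyz.2
      simp only [S3.mul_def, S3.inv_def, S3.phi] at e1 e2
      have hp1 : p.1 = g.x := by linear_combination e1
      have hp2 : p.2 = g.y := by linear_combination e2
      rw [show p = (g.x, g.y) from Prod.ext hp1 hp2]
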